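/- Let H be a real Hilbert space, D a dictionary in H, {t_k} a weakness sequence with t_k ∈ (0,1], M > 0, and f ∈ A_1(D, M). Suppose f_{m−1} ∈ H satisfies ⟨f − f_{m−1}, f_{m−1}⟩ = 0 and f_{m−1} ≠ f, and φ_m ∈ D satisfies |⟨f − f_{m−1}, φ_m⟩| ≥ t_m · sup_{φ∈D} |⟨f − f_{m−1}, φ⟩|. Then M^{−1} t_m ‖f − f_{m−1}‖² ≤ |⟨f − f_{m−1}, φ_m⟩|. -/

import Mathlib

open scoped BigOperators RealInnerProductSpace

/-- A dictionary in a normed space: a set of norm-one elements with dense linear span. -/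
def IsDictionary (H : Type*) [NormedAddCommGroup H] [NormedSpace ℝ H] (D : Set H) : Prop :=
  (∀ φ ∈ D, ‖φ‖ = 1) ∧ Dense (Submodule.span ℝ D : Set H)

/-- Finite linear combinations of dictionary elements with coefficients of total
absolute sum at most `M`. -/
def A1Pre (H : Type*) [NormedAddCommGroup H] [NormedSpace ℝ H] (D : Set H) (M : ℝ) : Set H :=
  {g | ∃ (n : ℕ) (c : Fin n → ℝ) (φ : Fin n → H),
    (∀ i, φ i ∈ D) ∧ (∑ i, |c i|) ≤ M ∧ g = ∑ i, c i • φ i}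

/-- The class `A₁(D, M)`: the closure of `A1Pre`. -/
def A1 (H : Type*) [NormedAddCommGroup H] [NormedSpace ℝ H] (D : Set H) (M : ℝ) : Set H :=
  closure (A1Pre H D M)

/-- Lower bound for the weak greedy selection in a real Hilbert space:
if `f ∈ A₁(D, M)`, `⟪f − f_{m−1}, f_{m−1}⟫ = 0`, `f_{m−1} ≠ f`, and `φ_m ∈ D` satisfies
`|⟪f − f_{m−1}, φ_m⟫| ≥ t_m sup_{φ ∈ D} |⟪f − f_{m−1}, φ⟫|`, then
`M⁻¹ t_m ‖f − f_{m−1}‖² ≤ |⟪f − f_{m−1}, φ_m⟫|`. -/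
theorem weak_greedy_selection_lower_bound {H : Type*} [NormedAddCommGroup H]
    [InnerProductSpace ℝ H] [CompleteSpace H]
    (D : Set H) (hD : IsDictionary H D)
    (tm : ℝ) (htm : tm ∈ Set.Ioc (0 : ℝ) 1)
    (M : ℝ) (hM : 0 < M) (f : H) (hf : f ∈ A1 H D M)
    (fm1 : H) (horth : ⟪f - fm1, fm1⟫ = 0) (hne : fm1 ≠ f)
    (φm : H) (hφm : φm ∈ D)
    (hsel : |⟪f - fm1, φm⟫| ≥ tm * sSup {x : ℝ | ∃ φ ∈ D, x = |⟪f - fm1, φ⟫|}) :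
    M⁻¹ * tm * ‖f - fm1‖ ^ 2 ≤ |⟪f - fm1, φm⟫| := by
  set g := f - fm1 with hg
  set S : Set ℝ := {x : ℝ | ∃ φ ∈ D, x = |⟪g, φ⟫|} with hS
  set s := sSup S with hs
  -- each element of S is ≤ ‖g‖
  have hub : ∀ x ∈ S, x ≤ ‖g‖ := by
    rintro x ⟨φ, hφ, rfl⟩
    calc |⟪g, φ⟫| ≤ ‖g‖ * ‖φ‖ := abs_real_inner_le_norm g φ
    _ = ‖g‖ := by rw [hD.1 φ hφ, mul_one]
  have hbdd : BddAbove S := ⟨‖g‖, hub⟩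
  -- key: ⟪g, f⟫ ≤ M * s
  have key : ⟪g, f⟫ ≤ M * s := by
    have hclosed : IsClosed {h : H | ⟪g, h⟫ ≤ M * s} :=
      isClosed_le (innerSL ℝ g).continuous continuous_const
    have hsub : A1Pre H D M ⊆ {h : H | ⟪g, h⟫ ≤ M * s} := by
      rintro h ⟨n, c, φ, hφD, hsum, rfl⟩
      simp only [Set.mem_setOf_eq, inner_sum, real_inner_smul_right]
      calc ∑ i, c i * ⟪g, φ i⟫ ≤ ∑ i, |c i| * s := by
            apply Finset.sum_le_sum
            intro i _
            calc c i * ⟪g, φ i⟫ ≤ |c i * ⟪g, φ i⟫| := le_abs_self _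
            _ = |c i| * |⟪g, φ i⟫| := abs_mul _ _
            _ ≤ |c i| * s := by
                apply mul_le_mul_of_nonneg_left _ (abs_nonneg _)
                exact le_csSup hbdd ⟨φ i, hφD i, rfl⟩
      _ = (∑ i, |c i|) * s := by rw [Finset.sum_mul]
      _ ≤ M * s := by
            apply mul_le_mul_of_nonneg_right hsum
            exact le_trans (abs_nonneg _) (le_csSup hbdd ⟨φm, hφm, rfl⟩)
    exact closure_minimal hsub hclosed hf
  have hnorm : ‖g‖ ^ 2 = ⟪g, f⟫ := by
    have : ⟪g, g⟫ = ⟪g, f⟫ - ⟪g, fm1⟫ := by rw [hg, inner_sub_right]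
    rw [← real_inner_self_eq_norm_sq, this, horth, sub_zero]
  have h1 : M⁻¹ * tm * ‖g‖ ^ 2 ≤ tm * s := by
    rw [hnorm]
    calc M⁻¹ * tm * ⟪g, f⟫ ≤ M⁻¹ * tm * (M * s) := by
          apply mul_le_mul_of_nonneg_left key
          exact mul_nonneg (inv_nonneg.2 hM.le) htm.1.le
    _ = tm * s := by field_simp
  exact h1.trans hsel
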